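/- The Lie subalgebra L(V) of T̄(V) (with commutator bracket) generated by V is contained in the kernel of the reduced shuffle diagonal Δ̄ : T̄(V) → T̄(V)⊗T̄(V). -/

import Mathlib

open scoped TensorProduct

/-- The shuffle diagonal on the tensor algebra: the unique algebra homomorphism
`T(V) → T(V) ⊗ T(V)` (concatenation products) sending `v ↦ v⊗1 + 1⊗v`. -/
noncomputable def shuffleDiag (k V : Type) [Field k] [AddCommGroup V] [Module k V] :
    TensorAlgebra k V →ₐ[k] TensorAlgebra k V ⊗[k] TensorAlgebra k V :=
  TensorAlgebra.lift k
    (((Algebra.TensorProduct.includeLeft :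
        TensorAlgebra k V →ₐ[k] TensorAlgebra k V ⊗[k] TensorAlgebra k V).toLinearMap
      + (Algebra.TensorProduct.includeRight :
        TensorAlgebra k V →ₐ[k] TensorAlgebra k V ⊗[k] TensorAlgebra k V).toLinearMap).comp
      (TensorAlgebra.ι k))

/-- The reduced shuffle diagonal `Δ̄(x) = Δ(x) − 1⊗x − x⊗1`. -/
noncomputable def redDiag (k V : Type) [Field k] [AddCommGroup V] [Module k V]
    (x : TensorAlgebra k V) : TensorAlgebra k V ⊗[k] TensorAlgebra k V :=
  shuffleDiag k V x - 1 ⊗ₜ[k] x - x ⊗ₜ[k] 1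

/-- The augmentation ideal `T̄(V)` of the tensor algebra, as a `k`-submodule. -/
noncomputable def augSub (k V : Type) [Field k] [AddCommGroup V] [Module k V] :
    Submodule k (TensorAlgebra k V) :=
  LinearMap.ker (TensorAlgebra.algebraMapInv : TensorAlgebra k V →ₐ[k] k).toLinearMap

/-- The subspace `T̄(V) ⊗ T̄(V)` inside `T(V) ⊗ T(V)`. -/
noncomputable def augSub2 (k V : Type) [Field k] [AddCommGroup V] [Module k V] :
    Submodule k (TensorAlgebra k V ⊗[k] TensorAlgebra k V) :=
  LinearMap.range (TensorProduct.map (augSub k V).subtype (augSub k V).subtype)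

attribute [local instance] LieRing.ofAssociativeRing

noncomputable def primSub (k V : Type) [Field k] [AddCommGroup V] [Module k V] :
    LieSubalgebra k (TensorAlgebra k V) where
  carrier := {x | shuffleDiag k V x = 1 ⊗ₜ[k] x + x ⊗ₜ[k] 1}
  add_mem' := by
    intro a b ha hb
    simp only [Set.mem_setOf_eq] at *
    rw [map_add, ha, hb, TensorProduct.tmul_add, TensorProduct.add_tmul]
    abel
  zero_mem' := by simp
  smul_mem' := by
    intro c x hx
    simp only [Set.mem_setOf_eq] at *
    rw [map_smul, hx, smul_add, TensorProduct.smul_tmul', TensorProduct.smul_tmul',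
      TensorProduct.smul_tmul]
  lie_mem' := by
    intro x y hx hy
    simp only [Set.mem_setOf_eq] at *
    rw [LieRing.of_associative_ring_bracket, map_sub, map_mul, map_mul, hx, hy]
    simp only [add_mul, mul_add, Algebra.TensorProduct.tmul_mul_tmul, one_mul, mul_one,
      TensorProduct.tmul_sub, TensorProduct.sub_tmul]
    abel

/-- The Lie subalgebra `L(V)` of `T̄(V)` (with the commutator bracket
`[x,y] = x⊗y − y⊗x`) generated by `V` is contained in the kernel of the reduced
shuffle diagonal `Δ̄`. -/
theorem lieSpan_subset_ker_redDiag {k V : Type} [Field k] [CharZero k]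
    [AddCommGroup V] [Module k V] :
    ∀ x ∈ LieSubalgebra.lieSpan k (TensorAlgebra k V)
      (Set.range (TensorAlgebra.ι k : V →ₗ[k] TensorAlgebra k V)),
      redDiag k V x = 0 := by
  intro x hx
  have h : x ∈ primSub k V := by
    refine LieSubalgebra.lieSpan_le.mpr ?_ hx
    rintro _ ⟨v, rfl⟩
    show shuffleDiag k V _ = _
    simp [shuffleDiag, add_comm]
  have h' : shuffleDiag k V x = 1 ⊗ₜ[k] x + x ⊗ₜ[k] 1 := h
  rw [redDiag, h']
  abel
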